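/- In an idempotent semifield S, the principal kernel generated by a equals { x ∈ S : |a|⁻ⁿ ≤ x ≤ |a|ⁿ for some n ∈ ℕ }, where |a| = a + a⁻¹. In particular, ⟨a⟩ = ⟨aᵏ⟩ for every nonzero integer k, and ⟨a⟩ = ⟨|a|⟩. -/

import Mathlib

/-- An idempotent semifield structure on a multiplicative abelian group `S`:
a commutative, associative, idempotent addition over which multiplication
distributes. The induced order is `a ≤ b ↔ a + b = b`. -/
structure IdemSemifieldStr (S : Type*) [CommGroup S] where
  add : S → S → S
  add_comm : ∀ a b, add a b = add b a
  add_assoc : ∀ a b c, add (add a b) c = add a (add b c)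
  add_idem : ∀ a, add a a = a
  mul_dist : ∀ g a b, g * add a b = add (g * a) (g * b)

namespace IdemSemifieldStr

variable {S : Type*} [CommGroup S] (A : IdemSemifieldStr S)

/-- The lattice order: `a ≤ b` iff `a + b = b`. -/
def le (a b : S) : Prop := A.add a b = b

/-- The norm `|a| = a + a⁻¹`. -/
def abs (a : S) : S := A.add a a⁻¹

/-- A kernel: a convex multiplicative subgroup. -/
def IsKernel (K : Set S) : Prop :=
  (1 : S) ∈ K ∧ (∀ a ∈ K, ∀ b ∈ K, a * b ∈ K) ∧ (∀ a ∈ K, a⁻¹ ∈ K) ∧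
  (∀ a ∈ K, ∀ b ∈ K, ∀ α β : S, A.add α β = 1 → A.add (α * a) (β * b) ∈ K)

/-- The kernel generated by a set: the intersection of all kernels containing it. -/
def kgen (T : Set S) : Set S := ⋂₀ {K : Set S | A.IsKernel K ∧ T ⊆ K}

end IdemSemifieldStr

namespace IdemSemifieldStr

variable {S : Type*} [CommGroup S] (A : IdemSemifieldStr S)

lemma lle_refl (a : S) : A.le a a := A.add_idem a

lemma lle_trans {a b c : S} (h1 : A.le a b) (h2 : A.le b c) : A.le a c := by
  unfold le at *
  calc A.add a c = A.add a (A.add b c) := by rw [h2]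
    _ = A.add (A.add a b) c := (A.add_assoc a b c).symm
    _ = A.add b c := by rw [h1]
    _ = c := h2

lemma lle_antisymm {a b : S} (h1 : A.le a b) (h2 : A.le b a) : a = b := by
  unfold le at *
  calc a = A.add b a := h2.symm
    _ = A.add a b := A.add_comm b a
    _ = b := h1

lemma le_add_left (a b : S) : A.le a (A.add a b) := by
  show A.add a (A.add a b) = A.add a b
  rw [← A.add_assoc, A.add_idem]

lemma le_add_right (a b : S) : A.le b (A.add a b) := by
  rw [A.add_comm]; exact A.le_add_left b a

lemma add_lle {a b c : S} (h1 : A.le a c) (h2 : A.le b c) : A.le (A.add a b) c := by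
  show A.add (A.add a b) c = c
  rw [A.add_assoc, h2, h1]

lemma add_le_add {a b c d : S} (h1 : A.le a c) (h2 : A.le b d) :
    A.le (A.add a b) (A.add c d) :=
  A.add_lle (A.lle_trans h1 (A.le_add_left c d)) (A.lle_trans h2 (A.le_add_right c d))

lemma mul_le_mul_left (c : S) {a b : S} (h : A.le a b) : A.le (c * a) (c * b) := by
  show A.add (c * a) (c * b) = c * b
  rw [← A.mul_dist, h]

lemma le_of_mul_le_mul {c a b : S} (h : A.le (c * a) (c * b)) : A.le a b := by
  have := A.mul_le_mul_left c⁻¹ h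
  simpa [inv_mul_cancel_left] using this

lemma mul_le_mul {a b c d : S} (h1 : A.le a c) (h2 : A.le b d) : A.le (a * b) (c * d) := by
  refine A.lle_trans (A.mul_le_mul_left a h2) ?_
  rw [mul_comm a d, mul_comm c d]
  exact A.mul_le_mul_left d h1

lemma inv_le_inv {a b : S} (h : A.le a b) : A.le b⁻¹ a⁻¹ := by
  have h2 := A.mul_le_mul_left (a⁻¹ * b⁻¹) h
  have e1 : a⁻¹ * b⁻¹ * a = b⁻¹ := by
    rw [mul_right_comm, inv_mul_cancel, one_mul]
  have e2 : a⁻¹ * b⁻¹ * b = a⁻¹ := by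
    rw [mul_assoc, inv_mul_cancel, mul_one]
  rwa [e1, e2] at h2

lemma pow_le_pow_base {a b : S} (h : A.le a b) (n : ℕ) : A.le (a ^ n) (b ^ n) := by
  induction n with
  | zero => simpa using A.lle_refl 1
  | succ n ih =>
    rw [pow_succ, pow_succ]
    exact A.mul_le_mul ih h

lemma one_le_pow {a : S} (h : A.le 1 a) (n : ℕ) : A.le 1 (a ^ n) := by
  simpa using A.pow_le_pow_base h n

lemma pow_le_pow_exp {a : S} (h : A.le 1 a) {m n : ℕ} (hmn : m ≤ n) :
    A.le (a ^ m) (a ^ n) := by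
  obtain ⟨d, rfl⟩ := Nat.exists_eq_add_of_le hmn
  rw [pow_add]
  have := A.mul_le_mul_left (a ^ m) (A.one_le_pow h d)
  simpa using this

/-- Geometric "sum" `1 + a + a² + ⋯ + aⁿ`. -/
def geo (a : S) : ℕ → S
  | 0 => 1
  | (n + 1) => A.add (geo a n) (a ^ (n + 1))

lemma geo_succ (a : S) (n : ℕ) :
    A.geo a (n + 1) = A.add (A.geo a n) (a ^ (n + 1)) := rfl

lemma pow_le_geo (a : S) (n : ℕ) : A.le (a ^ n) (A.geo a n) := by
  cases n with
  | zero => simpa [geo] using A.lle_refl 1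
  | succ n =>
    rw [A.geo_succ]
    exact A.le_add_right _ _

lemma one_add_mul_geo (a : S) (n : ℕ) :
    A.add 1 (a * A.geo a n) = A.geo a (n + 1) := by
  induction n with
  | zero =>
    show A.add 1 (a * 1) = A.add 1 (a ^ 1)
    rw [mul_one, pow_one]
  | succ n ih =>
    show A.add 1 (a * A.add (A.geo a n) (a ^ (n + 1))) = _
    rw [A.mul_dist, ← A.add_assoc, ih]
    show _ = A.add (A.geo a (n + 1)) (a ^ (n + 2))
    congr 1
    rw [← pow_succ']

/-- If `1 ≤ aⁿ` for some `n ≥ 1`, then `1 ≤ a`. -/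
lemma one_le_of_pow {a : S} {n : ℕ} (hn : n ≠ 0) (h : A.le 1 (a ^ n)) : A.le 1 a := by
  obtain ⟨m, rfl⟩ := Nat.exists_eq_succ_of_ne_zero hn
  have hgeo : A.le (a ^ (m + 1)) (a * A.geo a m) := by
    have := A.mul_le_mul_left a (A.pow_le_geo a m)
    rwa [← pow_succ'] at this
  have h1 : A.le 1 (a * A.geo a m) := A.lle_trans h hgeo
  have key : A.geo a (m + 1) = a * A.geo a m := by
    rw [← A.one_add_mul_geo]; exact h1
  have h2 : A.le (A.geo a m) (A.geo a (m + 1)) := by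
    rw [A.geo_succ]
    exact A.le_add_left _ _
  rw [key] at h2
  have h3 : A.le (A.geo a m * 1) (A.geo a m * a) := by
    rwa [mul_one, mul_comm]
  exact A.le_of_mul_le_mul h3

lemma prod_le_add_pow (u v : S) (i k : ℕ) :
    A.le (u ^ i * v ^ k) (A.add u v ^ (i + k)) := by
  induction i with
  | zero => simpa using A.pow_le_pow_base (A.le_add_right u v) k
  | succ i ih =>
    have h : A.le (u * (u ^ i * v ^ k)) (A.add u v * A.add u v ^ (i + k)) :=
      A.mul_le_mul (A.le_add_left u v) ih
    have e1 : u * (u ^ i * v ^ k) = u ^ (i + 1) * v ^ k := by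
      rw [← mul_assoc, ← pow_succ']
    have e3 : i + 1 + k = (i + k) + 1 := by omega
    have e2 : A.add u v * A.add u v ^ (i + k) = A.add u v ^ (i + 1 + k) := by
      rw [e3, pow_succ']
    rwa [e1, e2] at h

/-- Key sandwich: `aʲ ≤ aⁿ + a⁻ⁿ` whenever `j ≤ n` (written `n = j + d`). -/
lemma pow_sandwich (a : S) (j d : ℕ) :
    A.le (a ^ j) (A.add (a ^ (j + d)) (a⁻¹ ^ (j + d))) := by
  set n := j + d with hn
  rcases Nat.eq_zero_or_pos n with h0 | hpos
  · have hj : j = 0 := by omega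
    subst hj
    simp only [h0, pow_zero] at *
    exact A.le_add_left 1 1
  · set u := a ^ n
    set v := a⁻¹ ^ n
    set x := A.add u v * a⁻¹ ^ j with hx
    have hprod : A.le (u ^ (2 * j + d) * v ^ d) (A.add u v ^ (2 * j + d + d)) :=
      A.prod_le_add_pow u v (2 * j + d) d
    have hmul := A.mul_le_mul_left ((a⁻¹ ^ j) ^ (2 * n)) hprod
    have eL : (a⁻¹ ^ j) ^ (2 * n) * (u ^ (2 * j + d) * v ^ d) = 1 := by
      show (a⁻¹ ^ j) ^ (2 * n) * ((a ^ n) ^ (2 * j + d) * (a⁻¹ ^ n) ^ d) = 1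
      rw [← pow_mul, ← pow_mul, ← pow_mul, mul_comm ((a⁻¹) ^ (j * (2 * n))) _,
        mul_assoc, ← pow_add, inv_pow]
      have e : n * (2 * j + d) = n * d + j * (2 * n) := by ring
      rw [e, mul_inv_cancel]
    have eR : (a⁻¹ ^ j) ^ (2 * n) * A.add u v ^ (2 * j + d + d) = x ^ (2 * n) := by
      have e4 : 2 * j + d + d = 2 * n := by omega
      rw [e4, hx, mul_pow, mul_comm]
    rw [eL, eR] at hmul
    have hone : A.le 1 x := A.one_le_of_pow (by omega) hmul
    have := A.mul_le_mul_left (a ^ j) hone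
    rw [mul_one, hx, ← mul_assoc, mul_comm (a ^ j) (A.add u v), mul_assoc,
      inv_pow, mul_inv_cancel, mul_one] at this
    exact this

lemma one_le_abs (a : S) : A.le 1 (A.abs a) := by
  have h2 : A.le 1 (A.abs a ^ 2) := by
    have e : A.abs a ^ 2 = A.add (A.add (a * a) 1) (A.add 1 (a⁻¹ * a⁻¹)) := by
      rw [pow_two]
      show A.abs a * A.add a a⁻¹ = _
      rw [A.mul_dist]
      congr 1
      · show A.add a a⁻¹ * a = _
        rw [mul_comm, A.mul_dist, mul_inv_cancel]
      · show A.add a a⁻¹ * a⁻¹ = _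
        rw [mul_comm, A.mul_dist, inv_mul_cancel]
    rw [e]
    exact A.lle_trans (A.le_add_right (a * a) 1) (A.le_add_left _ _)
  exact A.one_le_of_pow two_ne_zero h2

lemma le_abs (a : S) : A.le a (A.abs a) := A.le_add_left a a⁻¹

lemma inv_le_abs (a : S) : A.le a⁻¹ (A.abs a) := A.le_add_right a a⁻¹

lemma abs_inv (a : S) : A.abs a⁻¹ = A.abs a := by
  unfold abs
  rw [inv_inv, A.add_comm]

lemma abs_pow (a : S) (n : ℕ) : A.abs a ^ n = A.add (a ^ n) (a⁻¹ ^ n) := by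
  refine A.lle_antisymm ?_ (A.add_lle (A.pow_le_pow_base (A.le_abs a) n)
    (A.pow_le_pow_base (A.inv_le_abs a) n))
  induction n with
  | zero => simpa using A.le_add_left 1 1
  | succ n ih =>
    have step : A.le (A.abs a ^ (n + 1)) (A.add (a ^ n) (a⁻¹ ^ n) * A.add a a⁻¹) := by
      rw [pow_succ]
      exact A.mul_le_mul ih (A.lle_refl (A.abs a))
    refine A.lle_trans step ?_
    have expand : A.add (a ^ n) (a⁻¹ ^ n) * A.add a a⁻¹ =
        A.add (A.add (a ^ n * a) (a ^ n * a⁻¹)) (A.add (a⁻¹ ^ n * a) (a⁻¹ ^ n * a⁻¹)) := by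
      rw [mul_comm, A.mul_dist, mul_comm _ (a ^ n), mul_comm _ (a⁻¹ ^ n),
        A.mul_dist, A.mul_dist]
    rw [expand]
    set T := A.add (a ^ (n + 1)) (a⁻¹ ^ (n + 1)) with hT
    have t1 : A.le (a ^ n * a) T := by
      rw [← pow_succ]; exact A.le_add_left _ _
    have t4 : A.le (a⁻¹ ^ n * a⁻¹) T := by
      rw [← pow_succ]; exact A.le_add_right _ _
    have t2 : A.le (a ^ n * a⁻¹) T := by
      cases n with
      | zero =>
        rw [hT]
        simpa using A.le_add_right a a⁻¹
      | succ m =>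
        have e : a ^ (m + 1) * a⁻¹ = a ^ m := by
          rw [pow_succ, mul_assoc, mul_inv_cancel, mul_one]
        rw [e, hT]
        exact A.pow_sandwich a m 2
    have t3 : A.le (a⁻¹ ^ n * a) T := by
      cases n with
      | zero =>
        rw [hT]
        simpa using A.le_add_left a a⁻¹
      | succ m =>
        have e : a⁻¹ ^ (m + 1) * a = a⁻¹ ^ m := by
          rw [pow_succ, mul_assoc, inv_mul_cancel, mul_one]
        rw [e, hT]
        have := A.pow_sandwich a⁻¹ m 2
        rw [inv_inv] at this
        refine A.lle_trans this ?_
        rw [A.add_comm]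
        exact A.lle_refl _
    exact A.add_lle (A.add_lle t1 t2) (A.add_lle t3 t4)

lemma abs_pow_nat (a : S) (n : ℕ) : A.abs (a ^ n) = A.abs a ^ n := by
  rw [A.abs_pow]
  unfold abs
  rw [inv_pow]

lemma abs_zpow (a : S) (k : ℤ) : A.abs (a ^ k) = A.abs a ^ k.natAbs := by
  rcases Int.natAbs_eq k with h | h
  · rw [h, zpow_natCast, A.abs_pow_nat, Int.natAbs_natCast]
  · rw [h, zpow_neg, zpow_natCast, A.abs_inv, A.abs_pow_nat, Int.natAbs_neg,
      Int.natAbs_natCast]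

lemma abs_abs (a : S) : A.abs (A.abs a) = A.abs a := by
  have h1 : A.le (A.abs a)⁻¹ (A.abs a) := by
    refine A.lle_trans ?_ (A.one_le_abs a)
    have := A.inv_le_inv (A.one_le_abs a)
    rwa [inv_one] at this
  show A.add (A.abs a) (A.abs a)⁻¹ = A.abs a
  rw [A.add_comm]
  exact h1

lemma kernel_sandwich {K : Set S} (hK : A.IsKernel K) {u v x : S}
    (hu : u ∈ K) (hv : v ∈ K) (h1 : A.le u x) (h2 : A.le x v) : x ∈ K := by
  obtain ⟨-, -, -, hconv⟩ := hK
  have hαβ : A.add (x * v⁻¹) 1 = 1 := by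
    have := A.mul_le_mul_left v⁻¹ h2
    rwa [inv_mul_cancel, mul_comm] at this
  have hmem := hconv v hv u hu (x * v⁻¹) 1 hαβ
  have e : A.add (x * v⁻¹ * v) (1 * u) = x := by
    rw [mul_assoc, inv_mul_cancel, mul_one, one_mul, A.add_comm]
    exact h1
  rwa [e] at hmem

lemma abs_mem {K : Set S} (hK : A.IsKernel K) {a : S} (ha : a ∈ K) : A.abs a ∈ K := by
  obtain ⟨-, -, hinv, hconv⟩ := hK
  have := hconv a ha a⁻¹ (hinv a ha) 1 1 (A.add_idem 1)
  simpa [one_mul, abs] using this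

/-- The principal kernel description. -/
theorem kgen_singleton (a : S) :
    A.kgen {a} = {x : S | ∃ n : ℕ, A.le ((A.abs a ^ n)⁻¹) x ∧ A.le x (A.abs a ^ n)} := by
  set X := {x : S | ∃ n : ℕ, A.le ((A.abs a ^ n)⁻¹) x ∧ A.le x (A.abs a ^ n)} with hX
  have habs1 := A.one_le_abs a
  have hXker : A.IsKernel X := by
    refine ⟨⟨0, ?_, ?_⟩, ?_, ?_, ?_⟩
    · simpa using A.lle_refl 1
    · simpa using A.lle_refl 1
    · rintro x ⟨m, hx1, hx2⟩ y ⟨n, hy1, hy2⟩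
      refine ⟨m + n, ?_, ?_⟩
      · rw [pow_add, mul_inv]
        exact A.mul_le_mul hx1 hy1
      · rw [pow_add]
        exact A.mul_le_mul hx2 hy2
    · rintro x ⟨m, hx1, hx2⟩
      refine ⟨m, ?_, ?_⟩
      · have := A.inv_le_inv hx2
        exact this
      · have := A.inv_le_inv hx1
        rwa [inv_inv] at this
    · rintro x ⟨m, hx1, hx2⟩ y ⟨n, hy1, hy2⟩ α β hαβ
      have hα : A.le α 1 := by
        show A.add α 1 = 1
        rw [← hαβ, ← A.add_assoc, A.add_idem]
      have hβ : A.le β 1 := by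
        show A.add β 1 = 1
        rw [← hαβ, A.add_comm α β, ← A.add_assoc, A.add_idem]
      refine ⟨m + n, ?_, ?_⟩
      · set c := (A.abs a ^ (m + n))⁻¹ with hc
        have hcm : A.le c ((A.abs a ^ m)⁻¹) :=
          A.inv_le_inv (A.pow_le_pow_exp habs1 (by omega))
        have hcn : A.le c ((A.abs a ^ n)⁻¹) :=
          A.inv_le_inv (A.pow_le_pow_exp habs1 (by omega))
        have h1 : A.le (α * c) (α * x) := A.mul_le_mul_left α (A.lle_trans hcm hx1)
        have h2 : A.le (β * c) (β * y) := A.mul_le_mul_left β (A.lle_trans hcn hy1)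
        have h3 : A.le (A.add (α * c) (β * c)) (A.add (α * x) (β * y)) :=
          A.add_le_add h1 h2
        have e : A.add (α * c) (β * c) = c := by
          rw [mul_comm α c, mul_comm β c, ← A.mul_dist, hαβ, mul_one]
        rwa [e] at h3
      · have hm : A.le x (A.abs a ^ (m + n)) :=
          A.lle_trans hx2 (A.pow_le_pow_exp habs1 (by omega))
        have hn : A.le y (A.abs a ^ (m + n)) :=
          A.lle_trans hy2 (A.pow_le_pow_exp habs1 (by omega))
        have h1 : A.le (α * x) (A.abs a ^ (m + n)) := by
          have := A.mul_le_mul hα hm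
          rwa [one_mul] at this
        have h2 : A.le (β * y) (A.abs a ^ (m + n)) := by
          have := A.mul_le_mul hβ hn
          rwa [one_mul] at this
        exact A.add_lle h1 h2
  have haX : a ∈ X := by
    refine ⟨1, ?_, ?_⟩
    · rw [pow_one]
      have h : A.le 1 (a * A.abs a) := by
        show A.add 1 (a * A.add a a⁻¹) = a * A.add a a⁻¹
        rw [A.mul_dist, mul_inv_cancel]
        exact A.le_add_right (a * a) 1
      have := A.mul_le_mul_left (A.abs a)⁻¹ h
      rwa [mul_one, mul_comm a (A.abs a), ← mul_assoc, inv_mul_cancel, one_mul] at this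
    · rw [pow_one]
      exact A.le_abs a
  apply subset_antisymm
  · exact Set.sInter_subset_of_mem ⟨hXker, Set.singleton_subset_iff.mpr haX⟩
  · rintro x ⟨n, hx1, hx2⟩
    intro K hK
    obtain ⟨hKker, haK⟩ := hK
    have haK' : a ∈ K := haK rfl
    have h1K := hKker.1
    have hmulK := hKker.2.1
    have hinvK := hKker.2.2.1
    have habsK : A.abs a ∈ K := A.abs_mem hKker haK'
    have hpowK : ∀ nn : ℕ, A.abs a ^ nn ∈ K := by
      intro nn
      induction nn with
      | zero => simpa using h1K
      | succ m ih =>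
        rw [pow_succ]
        exact hmulK _ ih _ habsK
    exact A.kernel_sandwich hKker (hinvK _ (hpowK n)) (hpowK n) hx1 hx2

end IdemSemifieldStr

/-- The principal kernel ⟨a⟩ is `{ x : |a|⁻ⁿ ≤ x ≤ |a|ⁿ for some n }`;
moreover ⟨a⟩ = ⟨aᵏ⟩ for every nonzero integer k, and ⟨a⟩ = ⟨|a|⟩. -/
theorem principal_kernel_description {S : Type*} [CommGroup S]
    (A : IdemSemifieldStr S) (a : S) :
    A.kgen {a} =
      {x : S | ∃ n : ℕ, A.le ((A.abs a ^ n)⁻¹) x ∧ A.le x (A.abs a ^ n)} ∧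
    (∀ k : ℤ, k ≠ 0 → A.kgen {a} = A.kgen {a ^ k}) ∧
    A.kgen {a} = A.kgen {A.abs a} := by
  refine ⟨A.kgen_singleton a, ?_, ?_⟩
  · intro k hk
    rw [A.kgen_singleton a, A.kgen_singleton (a ^ k)]
    set m := k.natAbs with hm
    have hm1 : 1 ≤ m := Int.natAbs_pos.mpr hk
    have habs1 := A.one_le_abs a
    have habsk : A.abs (a ^ k) = A.abs a ^ m := A.abs_zpow a k
    ext x
    constructor
    · rintro ⟨n, h1, h2⟩
      refine ⟨n, ?_, ?_⟩
      · rw [habsk, ← pow_mul]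
        refine A.lle_trans (A.inv_le_inv (A.pow_le_pow_exp habs1 ?_)) h1
        exact Nat.le_mul_of_pos_left n (by omega)
      · rw [habsk, ← pow_mul]
        refine A.lle_trans h2 (A.pow_le_pow_exp habs1 ?_)
        exact Nat.le_mul_of_pos_left n (by omega)
    · rintro ⟨n, h1, h2⟩
      rw [habsk, ← pow_mul] at h1 h2
      exact ⟨m * n, h1, h2⟩
  · rw [A.kgen_singleton a, A.kgen_singleton (A.abs a), A.abs_abs]
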